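/- ζ(3) = (5/2) · Σ_{n=1}^{∞} (-1)^{n-1} / (binom(2n, n) · n³). -/

import Mathlib

open scoped Nat
open Finset

namespace AperyAux

/-- summand of the double sum (unsigned). -/
noncomputable def aG (i j : ℕ) : ℝ := (i ! : ℝ) ^ 2 * (j ! : ℝ) / ((2 * i + 3 + j)! : ℝ)

/-- summand of the double sum (signed). -/
noncomputable def aH (p : ℕ × ℕ) : ℝ := (-1) ^ p.1 * aG p.1 p.2

/-- summand of the Apéry series. -/
noncomputable def aS (n : ℕ) : ℝ :=
    (-1 : ℝ) ^ n / ((Nat.choose (2 * (n + 1)) (n + 1) : ℝ) * ((n : ℝ) + 1) ^ 3)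

/-- telescoping witness for the partial fraction identity. -/
noncomputable def aQ (N j : ℕ) : ℝ :=
    (-1) ^ j * (j ! : ℝ) ^ 2 * ((N - j)! : ℝ) * ((N + 1)! : ℝ) / ((N ! : ℝ) * ((N + 1 + j)! : ℝ))

lemma fac_pos (m : ℕ) : (0 : ℝ) < (m ! : ℝ) := by exact_mod_cast m.factorial_pos

lemma fac_ne (m : ℕ) : ((m ! : ℕ) : ℝ) ≠ 0 := (fac_pos m).ne'

lemma aG_nonneg (i j : ℕ) : 0 ≤ aG i j := by
  unfold aG; positivity

/-- inner telescoping sum. -/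
lemma hasSum_inner (i : ℕ) :
    HasSum (fun j : ℕ => (j ! : ℝ) / ((2 * i + 3 + j)! : ℝ))
      (1 / ((2 * (i : ℝ) + 2) * ((2 * i + 2)! : ℝ))) := by
  set e : ℕ → ℝ := fun j => (j ! : ℝ) / ((2 * i + 2 + j)! : ℝ) with he
  have hterm : ∀ j : ℕ, (j ! : ℝ) / ((2 * i + 3 + j)! : ℝ) = (e j - e (j + 1)) / (2 * (i : ℝ) + 2) := by
    intro j
    have h1 : (2 * i + 3 + j)! = (2 * i + 3 + j) * (2 * i + 2 + j)! := by
      rw [show 2 * i + 3 + j = (2 * i + 2 + j) + 1 by ring, Nat.factorial_succ]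
    have h2 : (j + 1)! = (j + 1) * j ! := Nat.factorial_succ j
    simp only [he]
    rw [show 2 * i + 2 + (j + 1) = 2 * i + 3 + j by ring, h1, h2]
    have d1 := fac_ne (2 * i + 2 + j)
    have d2 : ((2 * i + 3 + j : ℕ) : ℝ) ≠ 0 := by positivity
    push_cast
    field_simp
    ring
  rw [hasSum_iff_tendsto_nat_of_nonneg (fun j => by positivity)]
  have hps : ∀ N : ℕ, (∑ j ∈ range N, (j ! : ℝ) / ((2 * i + 3 + j)! : ℝ))
      = (e 0 - e N) / (2 * (i : ℝ) + 2) := by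
    intro N
    rw [Finset.sum_congr rfl fun j _ => hterm j, ← Finset.sum_div, Finset.sum_range_sub' e]
  simp only [hps]
  have he0 : e 0 = 1 / ((2 * i + 2)! : ℝ) := by simp [he]
  have heN : Filter.Tendsto e Filter.atTop (nhds 0) := by
    apply squeeze_zero (fun N => by positivity) (g := fun N : ℕ => 1 / ((N : ℝ) + 1))
    · intro N
      have hle : ((N + 1)! : ℝ) ≤ ((2 * i + 2 + N)! : ℝ) := by
        exact_mod_cast Nat.factorial_le (by omega)
      have : e N ≤ (N ! : ℝ) / ((N + 1)! : ℝ) := by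
        exact div_le_div_of_nonneg_left (le_of_lt (fac_pos N)) (fac_pos (N + 1)) hle
      refine this.trans (le_of_eq ?_)
      rw [Nat.factorial_succ]
      have := fac_ne N
      push_cast
      field_simp
    · exact tendsto_one_div_add_atTop_nhds_zero_nat
  have : Filter.Tendsto (fun N : ℕ => (e 0 - e N) / (2 * (i : ℝ) + 2)) Filter.atTop
      (nhds ((e 0 - 0) / (2 * (i : ℝ) + 2))) := ((tendsto_const_nhds.sub heN).div_const _)
  simpa [he0, sub_zero, div_eq_mul_inv] using this

lemma hasSum_aG (i : ℕ) :
    HasSum (fun j : ℕ => aG i j)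
      ((i ! : ℝ) ^ 2 / ((2 * (i : ℝ) + 2) * ((2 * i + 2)! : ℝ))) := by
  have h := (hasSum_inner i).mul_left ((i ! : ℝ) ^ 2)
  rw [show (i ! : ℝ) ^ 2 / ((2 * (i : ℝ) + 2) * ((2 * i + 2)! : ℝ))
      = (i ! : ℝ) ^ 2 * (1 / ((2 * (i : ℝ) + 2) * ((2 * i + 2)! : ℝ))) by ring]
  simpa [aG, mul_div_assoc] using h

lemma tsum_aG_le (i : ℕ) :
    (i ! : ℝ) ^ 2 / ((2 * (i : ℝ) + 2) * ((2 * i + 2)! : ℝ)) ≤ 1 / ((i : ℝ) + 1) ^ 2 := by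
  have hdvd : (i + 1)! * (i + 1)! ∣ (2 * i + 2)! := by
    have := Nat.factorial_mul_factorial_dvd_factorial_add (i + 1) (i + 1)
    rwa [show i + 1 + (i + 1) = 2 * i + 2 by ring] at this
  have hle : (((i + 1)! * (i + 1)! : ℕ) : ℝ) ≤ ((2 * i + 2)! : ℝ) := by
    exact_mod_cast Nat.le_of_dvd (Nat.factorial_pos _) hdvd
  have hkey : ((i : ℝ) + 1) ^ 2 * (i ! : ℝ) ^ 2 ≤ (2 * (i : ℝ) + 2) * ((2 * i + 2)! : ℝ) := by
    have h1 : (((i + 1)! : ℕ) : ℝ) = ((i : ℝ) + 1) * (i ! : ℝ) := by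
      rw [Nat.factorial_succ]; push_cast; ring
    have h2 : ((i : ℝ) + 1) ^ 2 * (i ! : ℝ) ^ 2 ≤ ((2 * i + 2)! : ℝ) := by
      calc ((i : ℝ) + 1) ^ 2 * (i ! : ℝ) ^ 2 = (((i + 1)! * (i + 1)! : ℕ) : ℝ) := by
            push_cast [h1]; ring
        _ ≤ _ := hle
    have h3 : ((2 * i + 2)! : ℝ) ≤ (2 * (i : ℝ) + 2) * ((2 * i + 2)! : ℝ) := by
      nlinarith [fac_pos (2 * i + 2)]
    linarith
  rw [div_le_div_iff₀ (by positivity) (by positivity)]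
  nlinarith [fac_pos i, sq_nonneg ((i : ℝ) + 1)]

lemma summable_invsq : Summable (fun i : ℕ => 1 / ((i : ℝ) + 1) ^ 2) := by
  have h := (Real.summable_one_div_nat_pow (p := 2)).mpr one_lt_two
  have := (summable_nat_add_iff 1).mpr h
  simpa [add_comm] using this

lemma summable_aG : Summable (fun p : ℕ × ℕ => aG p.1 p.2) := by
  rw [summable_prod_of_nonneg (fun p => aG_nonneg p.1 p.2)]
  constructor
  · exact fun i => (hasSum_aG i).summable
  · apply Summable.of_nonneg_of_le (fun i => tsum_nonneg fun j => aG_nonneg i j)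
      (fun i => ?_) summable_invsq
    rw [(hasSum_aG i).tsum_eq]
    exact tsum_aG_le i

lemma summable_aH : Summable aH := by
  apply Summable.of_abs
  have : (fun p : ℕ × ℕ => |aH p|) = fun p : ℕ × ℕ => aG p.1 p.2 := by
    funext p
    simp [aH, abs_mul, abs_pow, abs_of_nonneg (aG_nonneg p.1 p.2)]
  rw [this]
  exact summable_aG

lemma summable_aS : Summable aS := by
  apply Summable.of_abs
  apply Summable.of_nonneg_of_le (fun n => abs_nonneg _) (fun n => ?_) summable_invsq
  have hC : (1 : ℝ) ≤ (Nat.choose (2 * (n + 1)) (n + 1) : ℝ) := by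
    exact_mod_cast Nat.one_le_iff_ne_zero.mpr (Nat.choose_pos (by omega)).ne'
  have hpos : (0 : ℝ) < (Nat.choose (2 * (n + 1)) (n + 1) : ℝ) * ((n : ℝ) + 1) ^ 3 := by
    positivity
  have : |aS n| = 1 / ((Nat.choose (2 * (n + 1)) (n + 1) : ℝ) * ((n : ℝ) + 1) ^ 3) := by
    rw [aS, abs_div, abs_pow, abs_neg, abs_one, one_pow, abs_of_pos hpos]
  rw [this]
  rw [div_le_div_iff₀ hpos (by positivity)]
  have h23 : ((n : ℝ) + 1) ^ 2 ≤ ((n : ℝ) + 1) ^ 3 :=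
    pow_le_pow_right₀ (by linarith [Nat.cast_nonneg (α := ℝ) n] : (1:ℝ) ≤ (n:ℝ)+1) (by norm_num)
  nlinarith [mul_le_mul_of_nonneg_right hC (pow_nonneg (by positivity : (0:ℝ) ≤ (n:ℝ)+1) 3)]

/-- termwise identity between inner sums and Apéry's summand. -/
lemma inner_eq_aS (i : ℕ) :
    (-1 : ℝ) ^ i * ((i ! : ℝ) ^ 2 / ((2 * (i : ℝ) + 2) * ((2 * i + 2)! : ℝ)))
      = (1 / 2) * aS i := by
  have hcmf := Nat.choose_mul_factorial_mul_factorial (show i + 1 ≤ 2 * (i + 1) by omega)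
  rw [show 2 * (i + 1) - (i + 1) = i + 1 by omega] at hcmf
  have hC : ((Nat.choose (2 * (i + 1)) (i + 1) : ℕ) : ℝ) * ((i + 1)! : ℝ) * ((i + 1)! : ℝ)
      = ((2 * i + 2)! : ℝ) := by
    rw [show 2 * i + 2 = 2 * (i + 1) by ring]
    exact_mod_cast congrArg (Nat.cast : ℕ → ℝ) hcmf
  have h1 : (((i + 1)! : ℕ) : ℝ) = ((i : ℝ) + 1) * (i ! : ℝ) := by
    rw [Nat.factorial_succ]; push_cast; ring
  have hCpos : (0 : ℝ) < (Nat.choose (2 * (i + 1)) (i + 1) : ℝ) := by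
    exact_mod_cast Nat.choose_pos (by omega)
  rw [aS]
  rw [← hC, h1]
  have := fac_pos i
  field_simp

/-- the key WZ-style telescoping identity. -/
lemma key (i t : ℕ) :
    ((i : ℝ) + (t : ℝ) + 2) ^ 3 * aH (i, t) = aQ (i + t + 1) i - aQ (i + t + 1) (i + 1) := by
  simp only [aH, aG, aQ]
  rw [show i + t + 1 - i = t + 1 by omega, show i + t + 1 - (i + 1) = t by omega,
    show i + t + 1 + 1 + i = 2 * i + t + 2 by omega,
    show i + t + 1 + 1 + (i + 1) = 2 * i + t + 3 by omega,
    show i + t + 1 + 1 = i + t + 2 by omega,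
    show 2 * i + 3 + t = 2 * i + t + 3 by omega]
  rw [show (t + 1)! = (t + 1) * t ! from Nat.factorial_succ t,
    show (i + 1)! = (i + 1) * i ! from Nat.factorial_succ i,
    show (i + t + 2)! = (i + t + 2) * (i + t + 1)! from Nat.factorial_succ (i + t + 1),
    show (2 * i + t + 3)! = (2 * i + t + 3) * (2 * i + t + 2)! from Nat.factorial_succ (2 * i + t + 2)]
  have d1 := fac_ne i
  have d2 := fac_ne t
  have d3 := fac_ne (i + t + 1)
  have d4 := fac_ne (2 * i + t + 2)
  have d5 : ((2 : ℝ) * i + t + 3) ≠ 0 := by positivity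
  push_cast
  field_simp
  ring

lemma sum_key (N : ℕ) :
    ((N : ℝ) + 1) ^ 3 * (∑ i ∈ range N, aH (i, N - 1 - i)) = aQ N 0 - aQ N N := by
  rw [Finset.mul_sum, ← Finset.sum_range_sub' (aQ N)]
  refine Finset.sum_congr rfl fun i hi => ?_
  have hiN : i < N := mem_range.mp hi
  have ht : i + (N - 1 - i) + 1 = N := by omega
  have hk := key i (N - 1 - i)
  rw [ht] at hk
  have hc : ((i : ℝ)) + ((N - 1 - i : ℕ) : ℝ) + 2 = (N : ℝ) + 1 := by
    have : ((i + (N - 1 - i) + 1 : ℕ) : ℝ) = (N : ℝ) := Nat.cast_inj.mpr ht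
    push_cast at this
    linarith
  rw [hc] at hk
  exact hk

lemma aQ_zero (N : ℕ) : aQ N 0 = 1 := by
  simp only [aQ, pow_zero, Nat.sub_zero, Nat.add_zero, Nat.factorial_zero, one_mul]
  rw [Nat.cast_one]
  have := fac_ne N; have := fac_ne (N + 1)
  field_simp

lemma aQ_last (N : ℕ) :
    aQ N N = (-1) ^ N * (N ! : ℝ) * ((N + 1)! : ℝ) / ((2 * N + 1)! : ℝ) := by
  simp only [aQ, Nat.sub_self, Nat.factorial_zero]
  rw [show N + 1 + N = 2 * N + 1 by omega]
  have := fac_ne N; have := fac_ne (N + 1); have := fac_ne (2 * N + 1)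
  rw [Nat.cast_one]
  field_simp

/-- the partial-fraction finite identity for each `N`. -/
lemma perN (N : ℕ) :
    (1 : ℝ) / ((N : ℝ) + 1) ^ 3 = (∑ i ∈ range N, aH (i, N - 1 - i)) + 2 * aS N := by
  have hN3 : ((N : ℝ) + 1) ^ 3 ≠ 0 := by positivity
  have h1 := sum_key N
  rw [aQ_zero, aQ_last] at h1
  -- binomial coefficient identity
  have hcmf := Nat.choose_mul_factorial_mul_factorial (show N + 1 ≤ 2 * (N + 1) by omega)
  rw [show 2 * (N + 1) - (N + 1) = N + 1 by omega] at hcmf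
  have hC : ((Nat.choose (2 * (N + 1)) (N + 1) : ℕ) : ℝ) * ((N + 1)! : ℝ) * ((N + 1)! : ℝ)
      = ((2 * N + 2)! : ℝ) := by
    rw [show 2 * N + 2 = 2 * (N + 1) by ring]
    exact_mod_cast congrArg (Nat.cast : ℕ → ℝ) hcmf
  have hCa : ((Nat.choose (2 * (N + 1)) (N + 1) : ℕ) : ℝ) * (N ! : ℝ) * ((N + 1)! : ℝ)
      = 2 * ((2 * N + 1)! : ℝ) := by
    have e1 : ((2 * N + 2)! : ℝ) = ((2 : ℝ) * N + 2) * ((2 * N + 1)! : ℝ) := by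
      rw [show (2 * N + 2)! = (2 * N + 2) * (2 * N + 1)! from Nat.factorial_succ (2 * N + 1)]
      push_cast; ring
    have e2 : (((N + 1)! : ℕ) : ℝ) = ((N : ℝ) + 1) * (N ! : ℝ) := by
      rw [Nat.factorial_succ]; push_cast; ring
    have hN1 : ((N : ℝ) + 1) ≠ 0 := by positivity
    have := hC
    rw [e1] at this
    nth_rewrite 1 [e2] at this
    apply mul_left_cancel₀ hN1
    rw [show ((N:ℝ)+1) * (((Nat.choose (2 * (N + 1)) (N + 1) : ℕ) : ℝ) * (N ! : ℝ) * ((N + 1)! : ℝ))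
        = ((Nat.choose (2 * (N + 1)) (N + 1) : ℕ) : ℝ) * (((N:ℝ)+1) * (N ! : ℝ)) * ((N + 1)! : ℝ) by ring,
      this]
    ring
  have hCpos : (0 : ℝ) < ((Nat.choose (2 * (N + 1)) (N + 1) : ℕ) : ℝ) := by
    exact_mod_cast Nat.choose_pos (show N + 1 ≤ 2 * (N + 1) by omega)
  rw [aS]
  have hCne : ((Nat.choose (2 * (N + 1)) (N + 1) : ℕ) : ℝ) ≠ 0 := hCpos.ne'
  have hfne := (fac_pos (2 * N + 1)).ne'
  have hfrac : (-1 : ℝ) ^ N * (N ! : ℝ) * ((N + 1)! : ℝ) / ((2 * N + 1)! : ℝ)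
      = 2 * (-1 : ℝ) ^ N / ((Nat.choose (2 * (N + 1)) (N + 1) : ℕ) : ℝ) := by
    rw [div_eq_div_iff hfne hCne]
    linear_combination (-1 : ℝ) ^ N * hCa
  rw [hfrac] at h1
  field_simp at h1 ⊢
  linear_combination (-1 : ℝ) * h1

noncomputable def aA (N : ℕ) : ℝ := ∑ i ∈ range N, aH (i, N - 1 - i)

noncomputable def aF (n : ℕ) : ℝ := ∑ p ∈ Finset.HasAntidiagonal.antidiagonal n, aH p

lemma aA_succ (n : ℕ) : aA (n + 1) = aF n := by
  rw [aA, aF, Finset.Nat.sum_antidiagonal_eq_sum_range_succ_mk]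
  exact Finset.sum_congr rfl fun i hi => by rw [show n + 1 - 1 - i = n - i from by omega]

lemma summable_sigma_aH :
    Summable fun x : Σ n : ℕ, (Finset.HasAntidiagonal.antidiagonal n : Finset (ℕ × ℕ)) => aH x.2 :=
  Finset.HasAntidiagonal.sigmaAntidiagonalEquivProd.summable_iff.mpr summable_aH

lemma aF_eq (n : ℕ) :
    aF n = ∑' p : (Finset.HasAntidiagonal.antidiagonal n : Finset (ℕ × ℕ)), aH p := by
  rw [aF, ← Finset.sum_finset_coe, ← tsum_fintype (L := SummationFilter.unconditional _)]
  rfl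

lemma summable_aF : Summable aF := by
  have h := summable_sigma_aH.sigma' (fun n => (hasSum_fintype _).summable)
  have heq : aF = fun n => ∑' p : (Finset.HasAntidiagonal.antidiagonal n : Finset (ℕ × ℕ)), aH p :=
    funext aF_eq
  rw [heq]
  exact h

lemma tsum_aF : ∑' n, aF n = ∑' p : ℕ × ℕ, aH p := by
  calc ∑' n, aF n
      = ∑' (n : ℕ) (p : (Finset.HasAntidiagonal.antidiagonal n : Finset (ℕ × ℕ))), aH p :=
        tsum_congr aF_eq
    _ = ∑' (x : Σ n : ℕ, (Finset.HasAntidiagonal.antidiagonal n : Finset (ℕ × ℕ))), aH x.2 :=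
        (summable_sigma_aH.tsum_sigma' (fun n => (hasSum_fintype _).summable)).symm
    _ = ∑' p : ℕ × ℕ, aH p := Finset.HasAntidiagonal.sigmaAntidiagonalEquivProd.tsum_eq aH

lemma summable_aA : Summable aA := by
  apply (summable_nat_add_iff 1).mp
  have : (fun n => aA (n + 1)) = aF := funext aA_succ
  rw [this]
  exact summable_aF

lemma tsum_aA : ∑' N, aA N = ∑' p : ℕ × ℕ, aH p := by
  rw [summable_aA.tsum_eq_zero_add]
  have h0 : aA 0 = 0 := by simp [aA]
  have : (fun n => aA (n + 1)) = aF := funext aA_succ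
  rw [h0, this, zero_add, tsum_aF]

lemma summable_inner (i : ℕ) : Summable fun j => aH (i, j) := by
  have := (hasSum_aG i).mul_left ((-1 : ℝ) ^ i)
  exact this.summable

lemma tsum_aH : ∑' p : ℕ × ℕ, aH p = (1 / 2) * ∑' n, aS n := by
  rw [summable_aH.tsum_prod' summable_inner]
  rw [show (∑' (i : ℕ) (j : ℕ), aH (i, j)) = ∑' i : ℕ, (1 / 2) * aS i from
    tsum_congr fun i => by
      simp only [aH]
      rw [((hasSum_aG i).mul_left ((-1 : ℝ) ^ i)).tsum_eq]
      exact inner_eq_aS i]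
  rw [tsum_mul_left]

end AperyAux

/-- Apéry's series (case s=1):
ζ(3) = (5/2) · Σ_{n=1}^{∞} (-1)^{n-1} / (binom(2n, n) · n³),
where ζ(3) = Σ_{n=1}^{∞} 1/n³. -/
theorem apery_series_zeta3 :
    (∑' n : ℕ, (1 : ℝ) / ((n : ℝ) + 1) ^ 3) =
      (5 / 2) * ∑' n : ℕ,
        (-1 : ℝ) ^ n /
          ((Nat.choose (2 * (n + 1)) (n + 1) : ℝ) * ((n : ℝ) + 1) ^ 3) := by
  rw [show (∑' n : ℕ, (-1 : ℝ) ^ n /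
      ((Nat.choose (2 * (n + 1)) (n + 1) : ℝ) * ((n : ℝ) + 1) ^ 3)) = ∑' n, AperyAux.aS n from rfl]
  rw [tsum_congr AperyAux.perN]
  rw [show (fun N : ℕ => (∑ i ∈ Finset.range N, AperyAux.aH (i, N - 1 - i)) + 2 * AperyAux.aS N)
      = fun N : ℕ => AperyAux.aA N + 2 * AperyAux.aS N from rfl]
  rw [AperyAux.summable_aA.tsum_add (AperyAux.summable_aS.mul_left 2), tsum_mul_left,
    AperyAux.tsum_aA, AperyAux.tsum_aH]
  ring
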